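/- Let Ω ∈ (0, π] and let N be a natural number. Then for every y ∈ ℂ^{2N+1}, Σ_{t∈ℤ} |(Ω/π) · Σ_{k=-N}^{N} y_k · sinc(kπ + Ωt)|² = (Ω/π) · Σ_{k=-N}^{N} |y_k|²; in particular the sampling map y ↦ ((Qy)(t))_{t∈ℤ} is, up to the factor √(Ω/π), an isometry from ℂ^{2N+1} into ℓ²(ℤ). -/

import Mathlib

open scoped BigOperators

/-- `sinc x = sin x / x` for `x ≠ 0`, and `sinc 0 = 1`. -/
noncomputable def sinc (x : ℝ) : ℝ := if x = 0 then 1 else Real.sin x / x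

/-- The band-limited sequence determined by coefficients `y = (y_k)_{k=-N}^N`
(indexed by `Fin (2N+1)` via `k ↦ k - N`):
`(Qy)(t) = (Ω/π) ∑_{k=-N}^N y_k sinc(kπ + Ωt)`. -/
noncomputable def Qmap (Ω : ℝ) (N : ℕ) (y : Fin (2 * N + 1) → ℂ) (t : ℤ) : ℂ :=
  ((Ω / Real.pi : ℝ) : ℂ) *
    ∑ k : Fin (2 * N + 1),
      y k * ((sinc ((((k : ℤ) : ℝ) - (N : ℝ)) * Real.pi + Ω * (t : ℝ))) : ℂ)

open MeasureTheory Complex Set intervalIntegral Finset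

lemma sinc_int_mul_pi (j : ℤ) (hj : j ≠ 0) : sinc ((j : ℝ) * Real.pi) = 0 := by
  rw [sinc, if_neg (mul_ne_zero (Int.cast_ne_zero.mpr hj) Real.pi_ne_zero),
    Real.sin_int_mul_pi, zero_div]

lemma integral_exp_I (c Ω : ℝ) (hΩ : 0 < Ω) :
    (∫ x : ℝ in (-Ω)..Ω, Complex.exp (Complex.I * c * x)) =
      ((2 * Ω * sinc (c * Ω) : ℝ) : ℂ) := by
  rcases eq_or_ne c 0 with rfl | hc
  · simp [sinc]; ring
  · have hc' : (Complex.I * c) ≠ 0 := by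
      simp [Complex.I_ne_zero, Complex.ofReal_eq_zero, hc]
    rw [integral_exp_mul_complex hc']
    have h1 : Complex.I * (c : ℂ) * (Ω : ℝ) = ((c * Ω : ℝ) : ℂ) * Complex.I := by
      push_cast; ring
    have h2 : Complex.I * (c : ℂ) * ((-Ω : ℝ) : ℂ) = ((-(c * Ω) : ℝ) : ℂ) * Complex.I := by
      push_cast; ring
    rw [h1, h2, Complex.exp_mul_I, Complex.exp_mul_I]
    rw [sinc, if_neg (mul_ne_zero hc hΩ.ne')]
    push_cast
    rw [Complex.cos_neg, Complex.sin_neg]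
    have hΩ' : (Ω : ℂ) ≠ 0 := by exact_mod_cast hΩ.ne'
    have hcc : (c : ℂ) ≠ 0 := by exact_mod_cast hc
    field_simp
    ring

namespace SamplingParseval
noncomputable def mfun (N : ℕ) (k : Fin (2 * N + 1)) : ℝ := ((k : ℤ) : ℝ) - (N : ℝ)
noncomputable def hfun (Ω : ℝ) (N : ℕ) (y : Fin (2 * N + 1) → ℂ) : ℝ → ℂ := fun x =>
  ∑ k : Fin (2 * N + 1),
    y k * Complex.exp (Complex.I * ((mfun N k * Real.pi / Ω : ℝ) : ℂ) * (x : ℂ))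
noncomputable def gfun (Ω : ℝ) (N : ℕ) (y : Fin (2 * N + 1) → ℂ) : ℝ → ℂ :=
  Set.indicator (Set.Ioc (-Ω) Ω) (hfun Ω N y)

instance : Fact (0 < 2 * Real.pi) := ⟨by positivity⟩

lemma intble (c : ℝ) (z : ℂ) (a b : ℝ) :
    IntervalIntegrable (fun x : ℝ => z * Complex.exp (Complex.I * (c : ℂ) * (x : ℂ)))
      volume a b :=
  (continuous_const.mul (Complex.continuous_exp.comp
    (continuous_const.mul Complex.continuous_ofReal))).intervalIntegrable _ _

lemma exp_mul_exp (a b : ℝ) (x : ℝ) :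
    Complex.exp (Complex.I * (a : ℂ) * (x : ℂ)) * Complex.exp (Complex.I * (b : ℂ) * (x : ℂ))
      = Complex.exp (Complex.I * ((a + b : ℝ) : ℂ) * (x : ℂ)) := by
  rw [← Complex.exp_add]; push_cast; ring_nf

lemma indicator_integral (Ω : ℝ) (h1 : 0 < Ω) (h2 : Ω ≤ Real.pi) (F : ℝ → ℂ) :
    (∫ x in (-Real.pi)..Real.pi, (Set.Ioc (-Ω) Ω).indicator F x)
      = ∫ x in (-Ω)..Ω, F x := by
  have hπ := Real.pi_pos
  rw [integral_of_le (by linarith), integral_of_le (by linarith),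
    MeasureTheory.integral_indicator measurableSet_Ioc,
    Measure.restrict_restrict measurableSet_Ioc,
    Set.inter_eq_left.mpr (Set.Ioc_subset_Ioc (by linarith) h2)]

lemma fourierCoeff_g (Ω : ℝ) (hΩ1 : 0 < Ω) (hΩ2 : Ω ≤ Real.pi) (N : ℕ)
    (y : Fin (2 * N + 1) → ℂ) (n : ℤ) :
    fourierCoeff (AddCircle.liftIoc (2 * Real.pi) (-Real.pi) (gfun Ω N y)) n
      = ((Ω / Real.pi : ℝ) : ℂ) *
          ∑ k : Fin (2 * N + 1), y k * ((sinc (mfun N k * Real.pi - n * Ω) : ℝ) : ℂ) := by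
  have hπ := Real.pi_pos
  have hπc : (Real.pi : ℂ) ≠ 0 := by exact_mod_cast Real.pi_ne_zero
  have step1 : fourierCoeff (AddCircle.liftIoc (2 * Real.pi) (-Real.pi) (gfun Ω N y)) n
      = (1 / (2 * Real.pi) : ℝ) •
        ∫ x in (-Real.pi)..Real.pi,
          Complex.exp (Complex.I * ((-n : ℝ) : ℂ) * (x : ℂ)) * gfun Ω N y x := by
    rw [fourierCoeff_eq_intervalIntegral _ n (-Real.pi)]
    have hb : -Real.pi + 2 * Real.pi = Real.pi := by ring
    rw [hb]
    congr 1
    rw [integral_of_le (by linarith), integral_of_le (by linarith)]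
    apply setIntegral_congr_fun measurableSet_Ioc
    intro x hx
    show (fourier (-n)) (x : AddCircle (2 * Real.pi)) •
      AddCircle.liftIoc (2 * Real.pi) (-Real.pi) (gfun Ω N y) (x : AddCircle (2 * Real.pi)) = _
    rw [AddCircle.liftIoc_coe_apply (by rwa [hb]), fourier_coe_apply, smul_eq_mul]
    congr 2
    push_cast
    field_simp
  rw [step1]
  have e2 : ∀ x : ℝ, Complex.exp (Complex.I * ((-n : ℝ) : ℂ) * (x : ℂ)) * gfun Ω N y x
      = (Set.Ioc (-Ω) Ω).indicator
          (fun x : ℝ => Complex.exp (Complex.I * ((-n : ℝ) : ℂ) * (x : ℂ)) * hfun Ω N y x) x := by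
    intro x; by_cases hx : x ∈ Set.Ioc (-Ω) Ω <;> simp [gfun, hx]
  rw [integral_congr (fun x _ => e2 x), indicator_integral Ω hΩ1 hΩ2]
  have e3 : ∀ x : ℝ, Complex.exp (Complex.I * ((-n : ℝ) : ℂ) * (x : ℂ)) * hfun Ω N y x
      = ∑ k : Fin (2 * N + 1),
          y k * Complex.exp (Complex.I * ((mfun N k * Real.pi / Ω + -n : ℝ) : ℂ) * (x : ℂ)) := by
    intro x
    rw [hfun, Finset.mul_sum]
    refine Finset.sum_congr rfl fun k _ => ?_
    rw [← exp_mul_exp (mfun N k * Real.pi / Ω) (-n : ℝ) x]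
    push_cast
    ring
  rw [integral_congr (fun x _ => e3 x),
    intervalIntegral.integral_finset_sum (fun k _ => intble _ _ _ _)]
  have e4 : ∀ k : Fin (2 * N + 1),
      (∫ x in (-Ω)..Ω,
        y k * Complex.exp (Complex.I * ((mfun N k * Real.pi / Ω + -n : ℝ) : ℂ) * (x : ℂ)))
      = y k * ((2 * Ω * sinc (mfun N k * Real.pi - n * Ω) : ℝ) : ℂ) := by
    intro k
    rw [intervalIntegral.integral_const_mul, integral_exp_I _ _ hΩ1]
    have : (mfun N k * Real.pi / Ω + -n) * Ω = mfun N k * Real.pi - n * Ω := by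
      field_simp
      ring
    rw [this]
  simp_rw [e4]
  rw [Complex.real_smul, Finset.mul_sum, Finset.mul_sum]
  refine Finset.sum_congr rfl fun k _ => ?_
  push_cast
  field_simp
lemma l2norm (Ω : ℝ) (hΩ1 : 0 < Ω) (hΩ2 : Ω ≤ Real.pi) (N : ℕ)
    (y : Fin (2 * N + 1) → ℂ) :
    (∫ x in (-Real.pi)..Real.pi, ‖gfun Ω N y x‖ ^ 2)
      = 2 * Ω * ∑ k : Fin (2 * N + 1), ‖y k‖ ^ 2 := by
  have hπ := Real.pi_pos
  apply Complex.ofReal_injective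
  rw [← intervalIntegral.integral_ofReal]
  have e1 : ∀ x : ℝ, ((‖gfun Ω N y x‖ ^ 2 : ℝ) : ℂ)
      = gfun Ω N y x * (starRingEnd ℂ) (gfun Ω N y x) := by
    intro x
    rw [Complex.mul_conj, Complex.normSq_eq_norm_sq]
  rw [integral_congr (fun x _ => e1 x)]
  have e2 : ∀ x : ℝ, gfun Ω N y x * (starRingEnd ℂ) (gfun Ω N y x)
      = (Set.Ioc (-Ω) Ω).indicator
          (fun x => hfun Ω N y x * (starRingEnd ℂ) (hfun Ω N y x)) x := by
    intro x; by_cases hx : x ∈ Set.Ioc (-Ω) Ω <;> simp [gfun, hx]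
  rw [integral_congr (fun x _ => e2 x), indicator_integral Ω hΩ1 hΩ2]
  have hconj : ∀ x : ℝ, (starRingEnd ℂ) (hfun Ω N y x)
      = ∑ l : Fin (2 * N + 1), (starRingEnd ℂ) (y l) *
          Complex.exp (Complex.I * ((-(mfun N l * Real.pi / Ω) : ℝ) : ℂ) * (x : ℂ)) := by
    intro x
    rw [hfun, map_sum]
    refine Finset.sum_congr rfl fun l _ => ?_
    rw [map_mul, ← Complex.exp_conj]
    congr 1
    simp only [map_mul, Complex.conj_I, Complex.conj_ofReal]
    push_cast
    ring
  have e3 : ∀ x : ℝ, hfun Ω N y x * (starRingEnd ℂ) (hfun Ω N y x)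
      = ∑ k : Fin (2 * N + 1), ∑ l : Fin (2 * N + 1),
          y k * (starRingEnd ℂ) (y l) *
            Complex.exp
              (Complex.I * ((mfun N k * Real.pi / Ω + -(mfun N l * Real.pi / Ω) : ℝ) : ℂ)
                * (x : ℂ)) := by
    intro x
    rw [hconj x, hfun, Finset.sum_mul_sum]
    refine Finset.sum_congr rfl fun k _ => Finset.sum_congr rfl fun l _ => ?_
    rw [← exp_mul_exp]
    ring
  have intsum : ∀ k ∈ (Finset.univ : Finset (Fin (2 * N + 1))), IntervalIntegrable
      (fun x : ℝ => ∑ l : Fin (2 * N + 1),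
        y k * (starRingEnd ℂ) (y l) *
          Complex.exp
            (Complex.I * ((mfun N k * Real.pi / Ω + -(mfun N l * Real.pi / Ω) : ℝ) : ℂ)
              * (x : ℂ))) volume (-Ω) Ω := by
    intro k _
    apply Continuous.intervalIntegrable
    exact continuous_finset_sum _ fun l _ => continuous_const.mul
      (Complex.continuous_exp.comp (continuous_const.mul Complex.continuous_ofReal))
  rw [integral_congr (fun x _ => e3 x), intervalIntegral.integral_finset_sum intsum]
  have e4 : ∀ k : Fin (2 * N + 1),
      (∫ x in (-Ω)..Ω, ∑ l : Fin (2 * N + 1),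
        y k * (starRingEnd ℂ) (y l) *
          Complex.exp
            (Complex.I * ((mfun N k * Real.pi / Ω + -(mfun N l * Real.pi / Ω) : ℝ) : ℂ)
              * (x : ℂ)))
      = ((2 * Ω : ℝ) : ℂ) * ((‖y k‖ ^ 2 : ℝ) : ℂ) := by
    intro k
    rw [intervalIntegral.integral_finset_sum (fun l _ => intble _ _ _ _)]
    have e5 : ∀ l : Fin (2 * N + 1),
        (∫ x in (-Ω)..Ω,
          y k * (starRingEnd ℂ) (y l) *
            Complex.exp
              (Complex.I * ((mfun N k * Real.pi / Ω + -(mfun N l * Real.pi / Ω) : ℝ) : ℂ)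
                * (x : ℂ)))
        = y k * (starRingEnd ℂ) (y l) *
            ((2 * Ω * sinc ((mfun N k - mfun N l) * Real.pi) : ℝ) : ℂ) := by
      intro l
      rw [intervalIntegral.integral_const_mul, integral_exp_I _ _ hΩ1]
      have : (mfun N k * Real.pi / Ω + -(mfun N l * Real.pi / Ω)) * Ω
          = (mfun N k - mfun N l) * Real.pi := by
        field_simp
        ring
      rw [this]
    simp_rw [e5]
    rw [Finset.sum_eq_single k]
    · rw [sub_self, zero_mul, sinc, if_pos rfl, Complex.mul_conj, Complex.normSq_eq_norm_sq]
      push_cast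
      ring
    · intro l _ hl
      have hzero : sinc ((mfun N k - mfun N l) * Real.pi) = 0 := by
        have harg : mfun N k - mfun N l = (((k : ℤ) - (l : ℤ) : ℤ) : ℝ) := by
          simp [mfun]
        rw [harg]
        apply sinc_int_mul_pi
        rw [sub_ne_zero]
        intro hE
        exact hl (Fin.ext (by exact_mod_cast hE.symm))
      rw [hzero]
      simp
    · intro h
      exact absurd (Finset.mem_univ k) h
  simp_rw [e4]
  rw [← Finset.mul_sum]
  push_cast
  ring

lemma hfun_cont (Ω : ℝ) (N : ℕ) (y : Fin (2 * N + 1) → ℂ) : Continuous (hfun Ω N y) :=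
  continuous_finset_sum _ fun k _ => continuous_const.mul
    (Complex.continuous_exp.comp (continuous_const.mul Complex.continuous_ofReal))

lemma gfun_bound (Ω : ℝ) (N : ℕ) (y : Fin (2 * N + 1) → ℂ) (x : ℝ) :
    ‖gfun Ω N y x‖ ≤ ∑ k : Fin (2 * N + 1), ‖y k‖ := by
  by_cases hx : x ∈ Set.Ioc (-Ω) Ω
  · rw [gfun, Set.indicator_of_mem hx]
    refine le_trans (norm_sum_le _ _) (Finset.sum_le_sum fun k _ => ?_)
    rw [norm_mul]
    have : ‖Complex.exp (Complex.I * ((mfun N k * Real.pi / Ω : ℝ) : ℂ) * (x : ℂ))‖ = 1 := by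
      rw [Complex.norm_exp]
      simp [Complex.mul_re, Complex.mul_im]
    rw [this, mul_one]
  · rw [gfun, Set.indicator_of_notMem hx, norm_zero]
    exact Finset.sum_nonneg fun k _ => norm_nonneg _

end SamplingParseval

open SamplingParseval AddCircle



/-- Parseval-type identity for the sampling map: for every coefficient vector `y`,
`∑_{t∈ℤ} |(Qy)(t)|² = (Ω/π) ∑_{k=-N}^N |y_k|²`; up to the factor `√(Ω/π)`, the map
`y ↦ (Qy(t))_{t∈ℤ}` is an isometry into `ℓ²(ℤ)`. -/
theorem sampling_map_parseval
    (Ω : ℝ) (hΩ : Ω ∈ Set.Ioc 0 Real.pi) (N : ℕ) (y : Fin (2 * N + 1) → ℂ) :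
    Summable (fun t : ℤ => ‖Qmap Ω N y t‖ ^ 2) ∧
    ∑' t : ℤ, ‖Qmap Ω N y t‖ ^ 2 =
      (Ω / Real.pi) * ∑ k : Fin (2 * N + 1), ‖y k‖ ^ 2 := by
  obtain ⟨hΩ1, hΩ2⟩ := hΩ
  have hπ := Real.pi_pos
  set g : ℝ → ℂ := gfun Ω N y with hg
  set f : AddCircle (2 * Real.pi) → ℂ := AddCircle.liftIoc (2 * Real.pi) (-Real.pi) g with hf
  -- measurability
  have hgm : Measurable g := ((hfun_cont Ω N y).measurable).indicator measurableSet_Ioc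
  have hfm : Measurable f := by
    have : f = g ∘ (Subtype.val) ∘ (AddCircle.measurableEquivIoc (2 * Real.pi) (-Real.pi)) := rfl
    rw [this]
    exact hgm.comp (measurable_subtype_coe.comp
      (AddCircle.measurableEquivIoc (2 * Real.pi) (-Real.pi)).measurable)
  -- boundedness and membership in L²
  have hbd : ∀ z, ‖f z‖ ≤ ∑ k : Fin (2 * N + 1), ‖y k‖ := by
    intro z
    have : f z = g ((AddCircle.equivIoc (2 * Real.pi) (-Real.pi) z : ℝ)) := rfl
    rw [this]
    exact gfun_bound Ω N y _
  have hmem : MeasureTheory.MemLp f 2 (AddCircle.haarAddCircle) :=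
    MeasureTheory.MemLp.of_bound hfm.aestronglyMeasurable _
      (Filter.Eventually.of_forall hbd)
  set F := hmem.toLp f with hF
  have hae : ⇑F =ᵐ[AddCircle.haarAddCircle] f := hmem.coeFn_toLp
  -- Fourier coefficients agree
  have hcoeff : ∀ i : ℤ, fourierCoeff (⇑F) i = fourierCoeff f i := by
    intro i
    unfold fourierCoeff
    exact MeasureTheory.integral_congr_ae (hae.mono fun x hx => by simp only [hx])
  -- Qmap is the Fourier coefficient
  have hQ : ∀ t : ℤ, Qmap Ω N y t = fourierCoeff f (-t) := by
    intro t
    rw [hf, hg, fourierCoeff_g Ω hΩ1 hΩ2 N y (-t), Qmap]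
    refine congrArg _ (Finset.sum_congr rfl fun k _ => ?_)
    have : mfun N k * Real.pi - ((-t : ℤ) : ℝ) * Ω
        = (((k : ℤ) : ℝ) - (N : ℝ)) * Real.pi + Ω * (t : ℝ) := by
      rw [mfun]; push_cast; ring
    rw [this]
  -- the L² norm of F
  have hint : ∫ t, ‖F t‖ ^ 2 ∂(AddCircle.haarAddCircle)
      = (Ω / Real.pi) * ∑ k : Fin (2 * N + 1), ‖y k‖ ^ 2 := by
    have h1 : ∫ t, ‖F t‖ ^ 2 ∂(AddCircle.haarAddCircle)
        = ∫ t, ‖f t‖ ^ 2 ∂(AddCircle.haarAddCircle) :=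
      MeasureTheory.integral_congr_ae (hae.mono fun x hx => by simp only [hx])
    have h2 : ∫ t, ‖f t‖ ^ 2 ∂(volume : MeasureTheory.Measure (AddCircle (2 * Real.pi)))
        = (2 * Real.pi) * ∫ t, ‖f t‖ ^ 2 ∂(AddCircle.haarAddCircle) := by
      rw [AddCircle.volume_eq_smul_haarAddCircle, MeasureTheory.integral_smul_measure,
        ENNReal.toReal_ofReal (by positivity), smul_eq_mul]
    have h3 : ∫ t, ‖f t‖ ^ 2 ∂(volume : MeasureTheory.Measure (AddCircle (2 * Real.pi)))
        = ∫ x in (-Real.pi)..Real.pi, ‖f (x : AddCircle (2 * Real.pi))‖ ^ 2 := by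
      have := AddCircle.intervalIntegral_preimage (2 * Real.pi) (-Real.pi)
        (fun t : AddCircle (2 * Real.pi) => ‖f t‖ ^ 2)
      rw [← this, show -Real.pi + 2 * Real.pi = Real.pi by ring]
    have h4 : ∫ x in (-Real.pi)..Real.pi, ‖f (x : AddCircle (2 * Real.pi))‖ ^ 2
        = ∫ x in (-Real.pi)..Real.pi, ‖g x‖ ^ 2 := by
      rw [intervalIntegral.integral_of_le (by linarith),
        intervalIntegral.integral_of_le (by linarith)]
      apply MeasureTheory.setIntegral_congr_fun measurableSet_Ioc
      intro x hx
      dsimp only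
      rw [hf, AddCircle.liftIoc_coe_apply
        (by rwa [show -Real.pi + 2 * Real.pi = Real.pi by ring])]
    have h5 := l2norm Ω hΩ1 hΩ2 N y
    rw [h1]
    have : (2 * Real.pi) * ∫ t, ‖f t‖ ^ 2 ∂(AddCircle.haarAddCircle)
        = 2 * Ω * ∑ k : Fin (2 * N + 1), ‖y k‖ ^ 2 := by
      rw [← h2, h3, h4]; exact h5
    have h2π : (2 * Real.pi) ≠ 0 := by positivity
    field_simp at this ⊢
    linarith [this]
  -- Parseval
  have hpars := tsum_sq_fourierCoeff F
  have hsum : Summable (fun i : ℤ => ‖fourierCoeff (⇑F) i‖ ^ 2) := by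
    have h := (lp.memℓp (fourierBasis.repr F)).summable (p := 2) (by norm_num)
    refine h.congr fun i => ?_
    rw [fourierBasis_repr]
    norm_num
  have habs : ∀ t : ℤ, ‖Qmap Ω N y t‖ ^ 2
      = ‖fourierCoeff (⇑F) (Equiv.neg ℤ t)‖ ^ 2 := by
    intro t
    rw [hQ t, ← hcoeff]
    rfl
  constructor
  · rw [show (fun t : ℤ => ‖Qmap Ω N y t‖ ^ 2)
        = (fun i : ℤ => ‖fourierCoeff (⇑F) i‖ ^ 2) ∘ (Equiv.neg ℤ) from funext habs]
    exact hsum.comp_injective (Equiv.neg ℤ).injective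
  · calc ∑' t : ℤ, ‖Qmap Ω N y t‖ ^ 2
        = ∑' t : ℤ, ‖fourierCoeff (⇑F) (Equiv.neg ℤ t)‖ ^ 2 := by
          exact tsum_congr habs
      _ = ∑' i : ℤ, ‖fourierCoeff (⇑F) i‖ ^ 2 := (Equiv.neg ℤ).tsum_eq (fun i : ℤ => ‖fourierCoeff (⇑F) i‖ ^ 2)
      _ = ∫ t, ‖F t‖ ^ 2 ∂(AddCircle.haarAddCircle) := hpars
      _ = (Ω / Real.pi) * ∑ k : Fin (2 * N + 1), ‖y k‖ ^ 2 := hint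
      _ = (Ω / Real.pi) * ∑ k : Fin (2 * N + 1), ‖y k‖ ^ 2 := by
          rfl
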